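/- Let H be an infinite-dimensional complex Hilbert space regarded as a JB*-triple via {a,b,c} = ½(⟨a,b⟩c + ⟨c,b⟩a). Then every norm-one element e of H is a tripotent ({e,e,e} = e), and the closed subtriple generated by a single element a is ℂa. Consequently, there exists a discontinuous linear map T : H → X into some Banach space whose restriction to each singly generated subtriple is continuous. -/

import Mathlib

open Filter Topology

variable {H : Type*} [NormedAddCommGroup H] [InnerProductSpace ℂ H]

/-- The Hilbert-space triple product `{a,b,c} = ½(⟨a,b⟩c + ⟨c,b⟩a)`, where
`⟨·,·⟩` is linear in the first variable (so `⟨a,b⟩ = inner b a` in Mathlib's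
convention). -/
noncomputable def htp (a b c : H) : H :=
  (2 : ℂ)⁻¹ • ((inner ℂ b a : ℂ) • c + (inner ℂ b c : ℂ) • a)

/-- A norm-closed complex subspace of `H` closed under the triple product. -/
def IsClosedSubtriple (S : Set H) : Prop :=
  IsClosed S ∧ (∃ p : Submodule ℂ H, (p : Set H) = S) ∧
    ∀ x ∈ S, ∀ y ∈ S, ∀ z ∈ S, htp x y z ∈ S

/-- The closed subtriple generated by a single element. -/
def genSubtriple (a : H) : Set H :=
  ⋂₀ {S : Set H | IsClosedSubtriple S ∧ a ∈ S}

lemma htp_mem_submodule (p : Submodule ℂ H) {x z : H} (y : H) (hx : x ∈ p) (hz : z ∈ p) :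
    htp x y z ∈ p := by
  exact p.smul_mem _ (p.add_mem (p.smul_mem _ hz) (p.smul_mem _ hx))

lemma genSubtriple_eq (a : H) [CompleteSpace H] :
    genSubtriple a = (Submodule.span ℂ {a} : Set H) := by
  apply Set.Subset.antisymm
  · intro x hx
    exact hx _ ⟨⟨(Submodule.span ℂ {a}).closed_of_finiteDimensional,
      ⟨Submodule.span ℂ {a}, rfl⟩,
      fun x hx y _ z hz => htp_mem_submodule _ y hx hz⟩,
      Submodule.mem_span_singleton_self a⟩
  · intro x hx S hS
    obtain ⟨⟨_, ⟨p, rfl⟩, _⟩, haS⟩ := hS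
    exact Submodule.span_le.mpr (Set.singleton_subset_iff.mpr haS) hx

lemma exists_discontinuous (hdim : ¬ FiniteDimensional ℂ H) :
    ∃ T : H →ₗ[ℂ] ℂ, ¬ Continuous T := by
  classical
  set b := Module.Basis.ofVectorSpace ℂ H
  have hinf : Infinite (Module.Basis.ofVectorSpaceIndex ℂ H) := by
    rw [← not_finite_iff_infinite]
    intro hfin
    exact hdim (by haveI := hfin; exact Module.Finite.of_basis b)
  let u : ℕ ↪ Module.Basis.ofVectorSpaceIndex ℂ H := Infinite.natEmbedding _
  have hb0 : ∀ i, b i ≠ 0 := fun i => b.ne_zero i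
  let c : Module.Basis.ofVectorSpaceIndex ℂ H → ℂ := fun i =>
    if h : i ∈ Set.range u then ((Function.invFun u i : ℕ) + 1) * ‖b i‖ else 0
  refine ⟨b.constr ℂ c, fun hc => ?_⟩
  let T : H →L[ℂ] ℂ := ⟨b.constr ℂ c, hc⟩
  obtain ⟨n, hn⟩ := exists_nat_gt ‖T‖
  have hval : T (b (u n)) = c (u n) := b.constr_basis ℂ c (u n)
  have hcval : c (u n) = ((n : ℂ) + 1) * ‖b (u n)‖ := by
    simp only [c, dif_pos (Set.mem_range_self n)]
    rw [Function.leftInverse_invFun u.injective n]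
  have hbound := T.le_opNorm (b (u n))
  rw [hval, hcval] at hbound
  have hpos : (0 : ℝ) < ‖b (u n)‖ := norm_pos_iff.mpr (hb0 (u n))
  have e1 : ‖((n : ℂ) + 1)‖ = (n : ℝ) + 1 := by
    rw [show ((n : ℂ) + 1) = ((n + 1 : ℕ) : ℂ) by push_cast; ring, Complex.norm_natCast]
    push_cast; ring
  have e2 : ‖((‖b (u n)‖ : ℝ) : ℂ)‖ = ‖b (u n)‖ := by
    rw [Complex.norm_real, Real.norm_eq_abs, abs_of_nonneg (norm_nonneg _)]
  rw [norm_mul, e1, e2] at hbound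
  have h1 : (n : ℝ) + 1 ≤ ‖T‖ := le_of_mul_le_mul_right (by linarith [hbound]) hpos
  linarith

theorem stmt14 [CompleteSpace H] (hdim : ¬ FiniteDimensional ℂ H) :
    (∀ e : H, ‖e‖ = 1 → htp e e e = e) ∧
      (∀ a : H, genSubtriple a = (Submodule.span ℂ {a} : Set H)) ∧
      ∃ T : H →ₗ[ℂ] ℂ, ¬ Continuous T ∧
        ∀ a : H, ContinuousOn T (genSubtriple a) := by
  refine ⟨?_, fun a => genSubtriple_eq a, ?_⟩
  · intro e he
    have : (inner ℂ e e : ℂ) = 1 := by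
      rw [inner_self_eq_norm_sq_to_K, he]; norm_num
    simp [htp, this, smul_smul]
    rw [← add_smul]
    norm_num [he]
  · obtain ⟨T, hT⟩ := exists_discontinuous hdim
    refine ⟨T, hT, fun a => ?_⟩
    rw [genSubtriple_eq a, continuousOn_iff_continuous_restrict]
    have : (Set.restrict (Submodule.span ℂ {a} : Set H) T) =
        (T.comp (Submodule.span ℂ {a}).subtype) := rfl
    change Continuous (T.comp (Submodule.span ℂ {a}).subtype)
    exact (T.comp (Submodule.span ℂ {a}).subtype).continuous_of_finiteDimensional
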